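/- Let d ≥ 1, let λ₁, …, λ_d ∈ ℝ, and let t ∈ ℝ with t ≠ λ_i for every i. Set k = #{i : λ_i > t}. Then the excursion set A = {u ∈ S^{d−1} : ∑_{i=1}^d λ_i u_i² ≥ t} is homotopy equivalent to the unit sphere S^{k−1} ⊂ ℝ^k (where S^{−1} is the empty set, so A is empty when k = 0). -/

import Mathlib

open scoped ContinuousMap

noncomputable section ExcursionAux
variable {d : ℕ} (lam : Fin d → ℝ) (t : ℝ)

/-- The index set of eigenvalues exceeding `t`. -/
def SS : Finset (Fin d) := Finset.univ.filter fun i => t < lam i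

/-- The shifted quadratic form. -/
def QQ (u : Fin d → ℝ) : ℝ := ∑ i, (lam i - t) * u i ^ 2

lemma norm_sq_euclidean (u : EuclideanSpace ℝ (Fin d)) :
    ‖u‖ = Real.sqrt (∑ i, u i ^ 2) := by
  rw [EuclideanSpace.norm_eq]
  congr 1
  exact Finset.sum_congr rfl fun i _ => by rw [Real.norm_eq_abs, sq_abs]

lemma norm_eq_one_iff (u : EuclideanSpace ℝ (Fin d)) :
    ‖u‖ = 1 ↔ ∑ i, u i ^ 2 = 1 := by
  rw [norm_sq_euclidean]
  constructor
  · intro h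
    have h2 : Real.sqrt (∑ i, u i ^ 2) ^ 2 = 1 := by rw [h]; norm_num
    rwa [Real.sq_sqrt (Finset.sum_nonneg fun i _ => sq_nonneg _)] at h2
  · intro h; rw [h, Real.sqrt_one]

lemma QQ_eq (u : Fin d → ℝ) :
    QQ lam t u = (∑ i, lam i * u i ^ 2) - t * ∑ i, u i ^ 2 := by
  rw [QQ, Finset.mul_sum, ← Finset.sum_sub_distrib]
  exact Finset.sum_congr rfl fun i _ => by ring

lemma QQ_nonneg_iff (u : EuclideanSpace ℝ (Fin d)) (hu : ‖u‖ = 1) :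
    0 ≤ QQ lam t u ↔ t ≤ ∑ i, lam i * u i ^ 2 := by
  rw [QQ_eq, (norm_eq_one_iff u).1 hu]
  constructor <;> intro h <;> linarith

lemma ne_zero_of_sumsq {m : ℕ} (v : EuclideanSpace ℝ (Fin m))
    (h : 0 < ∑ i, v i ^ 2) : v ≠ 0 := by
  intro h0
  rw [h0] at h
  simp only [PiLp.zero_apply] at h
  norm_num at h

/-- The straightening deformation. -/
def WW (c : ℝ) (u : EuclideanSpace ℝ (Fin d)) : EuclideanSpace ℝ (Fin d) :=
  WithLp.toLp 2 fun i => if t < lam i then u i else c * u i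

lemma WW_sum (w : Fin d → ℝ) (c : ℝ) (u : EuclideanSpace ℝ (Fin d)) :
    ∑ i, w i * (WW lam t c u i) ^ 2 =
      (∑ i ∈ SS lam t, w i * u i ^ 2) +
        c ^ 2 * ∑ i ∈ Finset.univ.filter fun i => ¬ t < lam i, w i * u i ^ 2 := by
  rw [← Finset.sum_filter_add_sum_filter_not Finset.univ (fun i => t < lam i)
      (fun i => w i * (WW lam t c u i) ^ 2), Finset.mul_sum]
  congr 1
  · exact Finset.sum_congr rfl fun i hi => by
      rw [WW, PiLp.toLp_apply, if_pos (Finset.mem_filter.1 hi).2]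
  · exact Finset.sum_congr rfl fun i hi => by
      rw [WW, PiLp.toLp_apply, if_neg (Finset.mem_filter.1 hi).2]; ring

lemma WW_one (u : EuclideanSpace ℝ (Fin d)) : WW lam t 1 u = u := by
  ext i; rw [WW, PiLp.toLp_apply]; split <;> simp

lemma cont_WW : Continuous fun p : ℝ × EuclideanSpace ℝ (Fin d) =>
    WW lam t p.1 p.2 := by
  refine (PiLp.continuous_toLp 2 _).comp (continuous_pi fun i => ?_)
  simp only [WW]
  by_cases h : t < lam i
  · simp only [if_pos h]
    exact (PiLp.continuous_apply 2 _ i).comp continuous_snd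
  · simp only [if_neg h]
    exact continuous_fst.mul ((PiLp.continuous_apply 2 _ i).comp continuous_snd)

/-- The enumeration of the positive part. -/
def ee : {x // x ∈ SS lam t} ≃ Fin (SS lam t).card := (SS lam t).equivFin

/-- Projection to the coordinates with `λ i > t`. -/
def xx (u : EuclideanSpace ℝ (Fin d)) : EuclideanSpace ℝ (Fin (SS lam t).card) :=
  WithLp.toLp 2 fun j => u ((ee lam t).symm j : Fin d)

lemma cont_xx : Continuous (xx lam t) :=
  (PiLp.continuous_toLp 2 _).comp (continuous_pi fun j => PiLp.continuous_apply 2 _ _)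

lemma xx_sum (w : Fin d → ℝ) (u : EuclideanSpace ℝ (Fin d)) :
    ∑ j, w ((ee lam t).symm j : Fin d) * (xx lam t u j) ^ 2
      = ∑ i ∈ SS lam t, w i * u i ^ 2 := by
  rw [← Finset.sum_coe_sort (SS lam t) (fun i => w i * u i ^ 2),
    ← Equiv.sum_comp (ee lam t).symm (fun a : {x // x ∈ SS lam t} => w a * u a ^ 2)]
  rfl

/-- The inclusion of the small sphere. -/
def gg (v : EuclideanSpace ℝ (Fin (SS lam t).card)) : EuclideanSpace ℝ (Fin d) :=
  WithLp.toLp 2 fun i => if h : i ∈ SS lam t then v (ee lam t ⟨i, h⟩) else 0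

lemma cont_gg : Continuous (gg lam t) := by
  refine (PiLp.continuous_toLp 2 _).comp (continuous_pi fun i => ?_)
  by_cases h : i ∈ SS lam t
  · simpa only [gg, dif_pos h] using PiLp.continuous_apply 2 _ (ee lam t ⟨i, h⟩)
  · simpa only [gg, dif_neg h] using
      (continuous_const : Continuous fun _ : EuclideanSpace ℝ (Fin (SS lam t).card) => (0 : ℝ))

lemma gg_sum (w : Fin d → ℝ) (v : EuclideanSpace ℝ (Fin (SS lam t).card)) :
    ∑ i, w i * (gg lam t v i) ^ 2
      = ∑ j, w ((ee lam t).symm j : Fin d) * v j ^ 2 := by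
  rw [← Finset.sum_filter_add_sum_filter_not Finset.univ (fun i => t < lam i)
      (fun i => w i * (gg lam t v i) ^ 2)]
  have h2 : ∑ i ∈ Finset.univ.filter (fun i => ¬ t < lam i),
      w i * (gg lam t v i) ^ 2 = 0 := by
    refine Finset.sum_eq_zero fun i hi => ?_
    have : i ∉ SS lam t := by
      simp only [SS, Finset.mem_filter] at *; tauto
    rw [gg, PiLp.toLp_apply, dif_neg this]; ring
  rw [h2, add_zero]
  rw [show (Finset.univ.filter fun i => t < lam i) = SS lam t from rfl,
    ← Finset.sum_coe_sort (SS lam t) (fun i => w i * (gg lam t v i) ^ 2),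
    ← Equiv.sum_comp (ee lam t).symm
      (fun a : {x // x ∈ SS lam t} => w a * (gg lam t v a) ^ 2)]
  refine Finset.sum_congr rfl fun j _ => ?_
  have ha := ((ee lam t).symm j).2
  rw [gg, PiLp.toLp_apply, dif_pos ha]
  congr 2
  rw [show (⟨((ee lam t).symm j : Fin d), ha⟩ : {x // x ∈ SS lam t}) = (ee lam t).symm j from rfl,
    Equiv.apply_symm_apply]

lemma xx_gg (v : EuclideanSpace ℝ (Fin (SS lam t).card)) :
    xx lam t (gg lam t v) = v := by
  ext j
  have ha := ((ee lam t).symm j).2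
  simp only [xx, gg, PiLp.toLp_apply, dif_pos ha]
  rw [show (⟨((ee lam t).symm j : Fin d), ha⟩ : {x // x ∈ SS lam t}) = (ee lam t).symm j from rfl,
    Equiv.apply_symm_apply]

lemma pos_part (ht : ∀ i, t ≠ lam i) (u : EuclideanSpace ℝ (Fin d))
    (hu1 : ∑ i, u i ^ 2 = 1) (hQ : 0 ≤ QQ lam t u) :
    0 < ∑ i ∈ SS lam t, u i ^ 2 := by
  rcases lt_or_eq_of_le (Finset.sum_nonneg fun i _ => sq_nonneg (u i)) with h | h
  · exact h
  exfalso
  have hzero : ∀ i ∈ SS lam t, u i = 0 := by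
    intro i hi
    have := (Finset.sum_eq_zero_iff_of_nonneg fun i _ => sq_nonneg (u i)).1 h.symm i hi
    exact pow_eq_zero_iff (n := 2) (by norm_num) |>.1 this
  have hsplit := (Finset.sum_filter_add_sum_filter_not Finset.univ (fun i => t < lam i)
      (fun i => (lam i - t) * u i ^ 2)).symm
  have hS : ∑ i ∈ SS lam t, (lam i - t) * u i ^ 2 = 0 :=
    Finset.sum_eq_zero fun i hi => by rw [hzero i hi]; ring
  have hQ' : 0 ≤ ∑ i ∈ Finset.univ.filter (fun i => ¬ t < lam i), (lam i - t) * u i ^ 2 := by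
    rw [QQ, hsplit] at hQ
    rw [show (Finset.univ.filter fun i => t < lam i) = SS lam t from rfl, hS, zero_add] at hQ
    exact hQ
  have hnonpos : ∀ i ∈ Finset.univ.filter (fun i => ¬ t < lam i),
      (lam i - t) * u i ^ 2 ≤ 0 := by
    intro i hi
    have hlt : lam i < t :=
      lt_of_le_of_ne (not_lt.1 (Finset.mem_filter.1 hi).2) fun h => ht i h.symm
    exact mul_nonpos_of_nonpos_of_nonneg (by linarith) (sq_nonneg _)
  have hzero' : ∀ i ∈ Finset.univ.filter (fun i => ¬ t < lam i), u i = 0 := by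
    intro i hi
    have hsum0 : ∑ i ∈ Finset.univ.filter (fun i => ¬ t < lam i), (lam i - t) * u i ^ 2 = 0 :=
      le_antisymm (Finset.sum_nonpos hnonpos) hQ'
    have := (Finset.sum_eq_zero_iff_of_nonpos hnonpos).1 hsum0 i hi
    have hlt : lam i < t :=
      lt_of_le_of_ne (not_lt.1 (Finset.mem_filter.1 hi).2) fun h => ht i h.symm
    have : u i ^ 2 = 0 := by
      rcases mul_eq_zero.1 this with h' | h'
      · linarith
      · exact h'
    exact pow_eq_zero_iff (n := 2) (by norm_num) |>.1 this
  have : ∑ i, u i ^ 2 = 0 := by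
    rw [← Finset.sum_filter_add_sum_filter_not Finset.univ (fun i => t < lam i)]
    rw [Finset.sum_eq_zero (fun i hi => by rw [hzero i hi]; ring),
      Finset.sum_eq_zero (fun i hi => by rw [hzero' i hi]; ring), add_zero]
  rw [this] at hu1; exact zero_ne_one hu1

lemma sum_smul_sq (w : Fin d → ℝ) (c : ℝ) (v : EuclideanSpace ℝ (Fin d)) :
    ∑ i, w i * ((c • v : EuclideanSpace ℝ (Fin d)) i) ^ 2 = c ^ 2 * ∑ i, w i * v i ^ 2 := by
  rw [Finset.mul_sum]
  exact Finset.sum_congr rfl fun i _ => by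
    rw [PiLp.smul_apply, smul_eq_mul]; ring

lemma mem_A (v : EuclideanSpace ℝ (Fin d)) (hv : v ≠ 0) (hQ : 0 ≤ QQ lam t v) :
    ‖(‖v‖⁻¹ • v : EuclideanSpace ℝ (Fin d))‖ = 1 ∧
      t ≤ ∑ i, lam i * ((‖v‖⁻¹ • v : EuclideanSpace ℝ (Fin d)) i) ^ 2 := by
  refine ⟨norm_smul_inv_norm hv, ?_⟩
  rw [sum_smul_sq]
  have hv2 : ∑ i, v i ^ 2 = ‖v‖ ^ 2 := by
    rw [norm_sq_euclidean, Real.sq_sqrt (Finset.sum_nonneg fun i _ => sq_nonneg _)]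
  have hQ' : t * ‖v‖ ^ 2 ≤ ∑ i, lam i * v i ^ 2 := by
    rw [QQ_eq, hv2] at hQ; linarith
  have hpos : 0 < ‖v‖ ^ 2 := pow_pos (norm_pos_iff.2 hv) 2
  have hinv : ‖v‖⁻¹ ^ 2 = (‖v‖ ^ 2)⁻¹ := by rw [inv_pow]
  rw [hinv]
  have := mul_le_mul_of_nonneg_left hQ' (inv_nonneg.2 hpos.le)
  calc t = (‖v‖ ^ 2)⁻¹ * (t * ‖v‖ ^ 2) := by field_simp
    _ ≤ (‖v‖ ^ 2)⁻¹ * ∑ i, lam i * v i ^ 2 := this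

end ExcursionAux

/-- for `λ₁, …, λ_d ∈ ℝ` and `t` distinct from every `λ_i`, with
`k = #{i : λ_i > t}`, the excursion set `{u ∈ S^{d-1} : ∑ λ_i u_i² ≥ t}` is
homotopy equivalent to the unit sphere `S^{k-1} ⊂ ℝ^k` (the empty set when
`k = 0`). -/
theorem excursion_set_of_quadratic_form_homotopyEquiv_sphere
    (d : ℕ) (hd : 1 ≤ d) (lam : Fin d → ℝ) (t : ℝ) (ht : ∀ i, t ≠ lam i) :
    Nonempty
      (({u : EuclideanSpace ℝ (Fin d) // ‖u‖ = 1 ∧ t ≤ ∑ i, lam i * (u i) ^ 2}) ≃ₕ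
        (Metric.sphere
          (0 : EuclideanSpace ℝ (Fin ((Finset.univ.filter fun i => t < lam i).card))) 1)) := by
  classical
  set A := {u : EuclideanSpace ℝ (Fin d) // ‖u‖ = 1 ∧ t ≤ ∑ i, lam i * (u i) ^ 2} with hA
  -- basic facts about elements of A
  have hQA : ∀ u : A, 0 ≤ QQ lam t u.1 := fun u =>
    (QQ_nonneg_iff lam t u.1 u.2.1).2 u.2.2
  have hsumA : ∀ u : A, ∑ i, (u.1 : EuclideanSpace ℝ (Fin d)) i ^ 2 = 1 := fun u =>
    (norm_eq_one_iff u.1).1 u.2.1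
  have hposA : ∀ u : A, 0 < ∑ i ∈ SS lam t, u.1 i ^ 2 := fun u =>
    pos_part lam t ht u.1 (hsumA u) (hQA u)
  -- xx of an element of A is nonzero
  have hxne : ∀ u : A, xx lam t u.1 ≠ 0 := by
    intro u
    refine ne_zero_of_sumsq _ ?_
    have := xx_sum lam t (fun _ => 1) u.1
    simp only [one_mul] at this
    rw [this]
    exact hposA u
  -- the forward map
  have hfmem : ∀ u : A,
      (‖xx lam t u.1‖⁻¹ • xx lam t u.1 : EuclideanSpace ℝ (Fin (SS lam t).card))
        ∈ Metric.sphere (0 : EuclideanSpace ℝ (Fin (SS lam t).card)) 1 := by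
    intro u
    rw [mem_sphere_zero_iff_norm]
    exact norm_smul_inv_norm (hxne u)
  set Sph := Metric.sphere (0 : EuclideanSpace ℝ (Fin (SS lam t).card)) 1 with hSph
  have hXcont : Continuous fun u : A => xx lam t u.1 :=
    (cont_xx lam t).comp continuous_subtype_val
  let f : C(A, Sph) :=
    ⟨fun u => ⟨‖xx lam t u.1‖⁻¹ • xx lam t u.1, hfmem u⟩,
      Continuous.subtype_mk
        ((hXcont.norm.inv₀ fun u => norm_ne_zero_iff.2 (hxne u)).smul hXcont) _⟩
  -- the backward map
  have hgmem : ∀ v : Sph, ‖(gg lam t v.1 : EuclideanSpace ℝ (Fin d))‖ = 1 ∧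
      t ≤ ∑ i, lam i * (gg lam t v.1 i) ^ 2 := by
    intro v
    have hv1 : ∑ j, (v.1 : EuclideanSpace ℝ (Fin (SS lam t).card)) j ^ 2 = 1 := by
      refine (norm_eq_one_iff v.1).1 ?_
      have := v.2
      rwa [mem_sphere_zero_iff_norm] at this
    have hsum : ∑ i, (gg lam t v.1 i) ^ 2 = 1 := by
      have := gg_sum lam t (fun _ => 1) v.1
      simp only [one_mul] at this
      rw [this, hv1]
    have hnorm : ‖(gg lam t v.1 : EuclideanSpace ℝ (Fin d))‖ = 1 :=
      (norm_eq_one_iff _).2 hsum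
    refine ⟨hnorm, ?_⟩
    rw [← QQ_nonneg_iff lam t _ hnorm, QQ, gg_sum lam t (fun i => lam i - t) v.1]
    refine Finset.sum_nonneg fun j _ => ?_
    have hj := ((ee lam t).symm j).2
    have : t < lam ((ee lam t).symm j : Fin d) := (Finset.mem_filter.1 hj).2
    exact mul_nonneg (by linarith) (sq_nonneg _)
  let g : C(Sph, A) :=
    ⟨fun v => ⟨gg lam t v.1, hgmem v⟩,
      Continuous.subtype_mk ((cont_gg lam t).comp continuous_subtype_val) _⟩
  -- f ∘ g = id
  have hfg : f.comp g = ContinuousMap.id Sph := by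
    refine ContinuousMap.ext fun v => Subtype.ext ?_
    show (‖xx lam t (gg lam t v.1)‖⁻¹ • xx lam t (gg lam t v.1) :
        EuclideanSpace ℝ (Fin (SS lam t).card)) = v.1
    rw [xx_gg]
    have hv : ‖(v.1 : EuclideanSpace ℝ (Fin (SS lam t).card))‖ = 1 := by
      have := v.2; rwa [mem_sphere_zero_iff_norm] at this
    rw [hv, inv_one, one_smul]
  -- the deformation
  have hWne : ∀ (c : ℝ) (u : A), WW lam t c u.1 ≠ 0 := by
    intro c u
    refine ne_zero_of_sumsq _ ?_
    have := WW_sum lam t (fun _ => 1) c u.1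
    simp only [one_mul] at this
    rw [this]
    have h1 : 0 < ∑ i ∈ SS lam t, u.1 i ^ 2 := hposA u
    have h2 : 0 ≤ c ^ 2 * ∑ i ∈ Finset.univ.filter fun i => ¬ t < lam i, u.1 i ^ 2 :=
      mul_nonneg (sq_nonneg _) (Finset.sum_nonneg fun i _ => sq_nonneg _)
    linarith
  have hWQ : ∀ (c : ℝ), 0 ≤ c → c ≤ 1 → ∀ u : A, 0 ≤ QQ lam t (WW lam t c u.1) := by
    intro c hc0 hc1 u
    rw [QQ, WW_sum lam t (fun i => lam i - t) c u.1]
    have hb : ∑ i ∈ Finset.univ.filter (fun i => ¬ t < lam i),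
        (lam i - t) * u.1 i ^ 2 ≤ 0 := by
      refine Finset.sum_nonpos fun i hi => ?_
      have hlt : lam i < t :=
        lt_of_le_of_ne (not_lt.1 (Finset.mem_filter.1 hi).2) fun h => ht i h.symm
      exact mul_nonpos_of_nonpos_of_nonneg (by linarith) (sq_nonneg _)
    have hsplit : (∑ i ∈ SS lam t, (lam i - t) * u.1 i ^ 2) +
        ∑ i ∈ Finset.univ.filter (fun i => ¬ t < lam i), (lam i - t) * u.1 i ^ 2
          = QQ lam t u.1 := by
      rw [QQ]
      exact Finset.sum_filter_add_sum_filter_not Finset.univ _ _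
    have hQu := hQA u
    have hc2 : c ^ 2 ≤ 1 := by nlinarith
    nlinarith [mul_le_mul_of_nonpos_right hc2 hb]
  -- the homotopy membership
  have hHmem : ∀ (p : unitInterval × A),
      ‖(‖WW lam t (p.1 : ℝ) p.2.1‖⁻¹ • WW lam t (p.1 : ℝ) p.2.1 :
          EuclideanSpace ℝ (Fin d))‖ = 1 ∧
        t ≤ ∑ i, lam i * ((‖WW lam t (p.1 : ℝ) p.2.1‖⁻¹ • WW lam t (p.1 : ℝ) p.2.1 :
          EuclideanSpace ℝ (Fin d)) i) ^ 2 := fun p =>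
    mem_A lam t _ (hWne _ p.2) (hWQ _ p.1.2.1 p.1.2.2 p.2)
  have hWcont : Continuous fun p : unitInterval × A => WW lam t (p.1 : ℝ) p.2.1 :=
    (cont_WW lam t).comp
      ((continuous_subtype_val.comp continuous_fst).prodMk
        (continuous_subtype_val.comp continuous_snd))
  -- H(0, u) = g (f u)
  have hH0 : ∀ u : A,
      (‖WW lam t 0 u.1‖⁻¹ • WW lam t 0 u.1 : EuclideanSpace ℝ (Fin d))
        = gg lam t (‖xx lam t u.1‖⁻¹ • xx lam t u.1) := by
    intro u
    have hnorm : ‖WW lam t 0 u.1‖ = ‖xx lam t u.1‖ := by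
      rw [norm_sq_euclidean, norm_sq_euclidean]
      congr 1
      have h1 := WW_sum lam t (fun _ => 1) 0 u.1
      have h2 := xx_sum lam t (fun _ => 1) u.1
      simp only [one_mul] at h1 h2
      rw [h1, h2]
      ring
    ext i
    rw [PiLp.smul_apply, smul_eq_mul, hnorm]
    by_cases h : i ∈ SS lam t
    · have hti : t < lam i := (Finset.mem_filter.1 h).2
      simp only [gg, PiLp.toLp_apply, dif_pos h, WW, if_pos hti, PiLp.smul_apply, smul_eq_mul, xx]
      rw [show ((ee lam t).symm (ee lam t ⟨i, h⟩) : Fin d)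
          = ((⟨i, h⟩ : {x // x ∈ SS lam t}) : Fin d) from by
        rw [Equiv.symm_apply_apply]]
    · have hti : ¬ t < lam i := by
        intro hc
        exact h (Finset.mem_filter.2 ⟨Finset.mem_univ i, hc⟩)
      simp only [gg, PiLp.toLp_apply, dif_neg h, WW, if_neg hti]
      ring
  -- H(1, u) = u
  have hH1 : ∀ u : A,
      (‖WW lam t 1 u.1‖⁻¹ • WW lam t 1 u.1 : EuclideanSpace ℝ (Fin d)) = u.1 := by
    intro u
    rw [WW_one, u.2.1, inv_one, one_smul]
  -- the homotopy
  let H : ContinuousMap.Homotopy (g.comp f) (ContinuousMap.id A) :=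
    { toFun := fun p => ⟨‖WW lam t (p.1 : ℝ) p.2.1‖⁻¹ • WW lam t (p.1 : ℝ) p.2.1, hHmem p⟩
      continuous_toFun := Continuous.subtype_mk
        ((hWcont.norm.inv₀ fun p => norm_ne_zero_iff.2 (hWne _ p.2)).smul hWcont) _
      map_zero_left := fun u => by
        apply Subtype.ext
        simp only [Set.Icc.coe_zero]
        exact hH0 u
      map_one_left := fun u => by
        apply Subtype.ext
        simp only [Set.Icc.coe_one]
        exact hH1 u }
  exact ⟨{ toFun := f
           invFun := g
           left_inv := ⟨H⟩
           right_inv := hfg ▸ ContinuousMap.Homotopic.refl _ }⟩
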